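/- arXiv:2112.05497 — 3 statements merged into one kernel-verified Lean document; each statement's English description precedes it below -/
import Mathlib

section
/- Under the hypotheses of the previous statement, if additionally Δ is persistently exciting, i.e., there exist T > 0 and μ > 0 with ∫_t^{t+T} Δ(s)² ds ≥ μ for all t ≥ 0, then |θ̂(t) − θ| → 0 exponentially: there exist c, λ > 0 with |θ̂(t) − θ| ≤ c e^{−λ t} |θ̂(0) − θ|. -/
open Matrix

/-- under the hypotheses of Statement 11, if moreover `Δ` is
persistently exciting, then `θ̂(t) → θ` exponentially. -/
theorem drem_pe_exponential_convergence {q : ℕ}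
    (H : (Fin q → ℝ) → (Fin q → ℝ)) (ρ : ℝ) (hρ : 0 < ρ)
    (hmono : ∀ a b : Fin q → ℝ,
      (a - b) ⬝ᵥ (H a - H b) ≥ ρ * ((a - b) ⬝ᵥ (a - b)))
    (hlip : LocallyLipschitz H)
    (θ : Fin q → ℝ) (γ : ℝ) (hγ : 0 < γ)
    (Δ : ℝ → ℝ) (hΔc : Continuous Δ) (hΔb : ∃ M : ℝ, ∀ t : ℝ, 0 ≤ t → |Δ t| ≤ M)
    (θh : ℝ → Fin q → ℝ)
    (hode : ∀ t : ℝ, 0 ≤ t →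
      HasDerivAt θh ((-γ * (Δ t) ^ 2) • (H (θh t) - H θ)) t)
    (T μ : ℝ) (hT : 0 < T) (hμ : 0 < μ)
    (hpe : ∀ t : ℝ, 0 ≤ t → μ ≤ ∫ s in t..(t + T), (Δ s) ^ 2) :
    ∃ c > (0 : ℝ), ∃ lam > (0 : ℝ), ∀ t ≥ (0 : ℝ),
      ‖θh t - θ‖ ≤ c * Real.exp (-lam * t) * ‖θh 0 - θ‖ := by
  classical
  set V : ℝ → ℝ := fun t => (θh t - θ) ⬝ᵥ (θh t - θ) with hV
  have hVnn : ∀ t, 0 ≤ V t := fun t =>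
    Finset.sum_nonneg fun i _ => mul_self_nonneg _
  set k : ℝ := 2 * γ * ρ with hk
  have hkpos : 0 < k := by positivity
  have hΔ2 : Continuous fun s => (Δ s) ^ 2 := hΔc.pow 2
  set I : ℝ → ℝ := fun t => ∫ s in (0:ℝ)..t, (Δ s) ^ 2 with hIdef
  have hI : ∀ b : ℝ, HasDerivAt I ((Δ b) ^ 2) b := fun b =>
    intervalIntegral.integral_hasDerivAt_right (hΔ2.intervalIntegrable _ _)
      (hΔ2.stronglyMeasurableAtFilter _ _) hΔ2.continuousAt
  have hIcont : Continuous I := continuous_iff_continuousAt.2 fun b => (hI b).continuousAt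
  -- derivative of V
  have hVd : ∀ t, 0 ≤ t → HasDerivAt V
      (2 * (-γ * Δ t ^ 2) * ((θh t - θ) ⬝ᵥ (H (θh t) - H θ))) t := by
    intro t ht
    have hcomp : ∀ i : Fin q, HasDerivAt (fun s => θh s i - θ i)
        (-γ * Δ t ^ 2 * (H (θh t) i - H θ i)) t := by
      intro i
      have h1 := (ContinuousLinearMap.proj (R := ℝ) (φ := fun _ : Fin q => ℝ)
        i).hasFDerivAt.comp_hasDerivAt t (hode t ht)
      simpa [Pi.smul_apply, smul_eq_mul, Pi.sub_apply] using h1.sub_const (θ i)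
    have hsq : ∀ i : Fin q, HasDerivAt (fun s => (θh s i - θ i) * (θh s i - θ i))
        (2 * ((θh t i - θ i) * (-γ * Δ t ^ 2 * (H (θh t) i - H θ i)))) t := by
      intro i
      have h2 := (hcomp i).fun_mul (hcomp i)
      exact h2.congr_deriv (by ring)
    have hsum := HasDerivAt.fun_sum (u := Finset.univ)
      (fun i (_ : i ∈ Finset.univ) => hsq i)
    have hVeq : V = fun s => ∑ i, (θh s i - θ i) * (θh s i - θ i) := by
      funext s; simp [hV, dotProduct]
    rw [hVeq]
    refine hsum.congr_deriv ?_
    simp only [dotProduct, Pi.sub_apply, Finset.mul_sum]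
    apply Finset.sum_congr rfl
    intro i _
    ring
  -- bound on derivative
  have hbound : ∀ t, 0 ≤ t →
      2 * (-γ * Δ t ^ 2) * ((θh t - θ) ⬝ᵥ (H (θh t) - H θ)) ≤ -(k * Δ t ^ 2) * V t := by
    intro t ht
    have h1 := hmono (θh t) θ
    have h2 : (0:ℝ) ≤ 2 * γ * Δ t ^ 2 := by positivity
    have h3 := mul_nonneg h2 (sub_nonneg.2 h1)
    rw [hk, hV]
    nlinarith [h3]
  -- derivative of W := V * exp (k * I)
  have hW : ∀ t, 0 ≤ t → HasDerivAt (fun s => V s * Real.exp (k * I s))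
      ((2 * (-γ * Δ t ^ 2) * ((θh t - θ) ⬝ᵥ (H (θh t) - H θ))) * Real.exp (k * I t)
        + V t * (Real.exp (k * I t) * (k * Δ t ^ 2))) t := by
    intro t ht
    exact (hVd t ht).mul (((hI t).const_mul k).exp)
  have hWderiv : ∀ x ∈ interior (Set.Ici (0:ℝ)),
      deriv (fun s => V s * Real.exp (k * I s)) x ≤ 0 := by
    intro x hx
    rw [interior_Ici] at hx
    have hx0 : (0:ℝ) ≤ x := le_of_lt hx
    rw [(hW x hx0).deriv]
    have h1 := hbound x hx0
    have h2 : (0:ℝ) < Real.exp (k * I x) := Real.exp_pos _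
    have h3 := mul_le_mul_of_nonneg_right h1 h2.le
    nlinarith [h3]
  have hWcont : ContinuousOn (fun s => V s * Real.exp (k * I s)) (Set.Ici (0:ℝ)) := by
    apply ContinuousOn.mul
    · exact fun t ht => ((hVd t ht).continuousAt).continuousWithinAt
    · exact (Real.continuous_exp.comp (continuous_const.mul hIcont)).continuousOn
  have hWdiff : DifferentiableOn ℝ (fun s => V s * Real.exp (k * I s))
      (interior (Set.Ici (0:ℝ))) := by
    intro x hx
    rw [interior_Ici] at hx
    exact ((hW x (le_of_lt hx)).differentiableAt).differentiableWithinAt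
  have hanti : AntitoneOn (fun s => V s * Real.exp (k * I s)) (Set.Ici (0:ℝ)) :=
    antitoneOn_of_deriv_nonpos (convex_Ici 0) hWcont hWdiff hWderiv
  have hVle : ∀ t, 0 ≤ t → V t * Real.exp (k * I t) ≤ V 0 := by
    intro t ht
    have h := hanti Set.self_mem_Ici ht ht
    have hI0 : I 0 = 0 := intervalIntegral.integral_same
    simpa [hI0] using h
  -- PE lower bound on I
  have hImono : ∀ n : ℕ, μ * n ≤ I ((n : ℝ) * T) := by
    intro n
    induction n with
    | zero => simp [hIdef]
    | succ n ih =>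
      have hadj := intervalIntegral.integral_add_adjacent_intervals
        (hΔ2.intervalIntegrable 0 ((n:ℝ)*T) : IntervalIntegrable _ MeasureTheory.volume _ _)
        (hΔ2.intervalIntegrable ((n:ℝ)*T) ((n:ℝ)*T+T) : IntervalIntegrable _ MeasureTheory.volume _ _)
      have hpe' := hpe ((n:ℝ)*T) (by positivity)
      have heq : ((n+1 : ℕ) : ℝ) * T = (n:ℝ)*T + T := by push_cast; ring
      rw [heq]
      have : I ((n:ℝ)*T + T) = I ((n:ℝ)*T) + ∫ s in ((n:ℝ)*T)..((n:ℝ)*T+T), (Δ s)^2 := by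
        rw [hIdef]; dsimp only; linarith [hadj]
      push_cast
      rw [this]
      push_cast at ih
      linarith
  have hIlb : ∀ t, 0 ≤ t → μ * (t / T - 1) ≤ I t := by
    intro t ht
    set n := ⌊t / T⌋₊ with hn
    have hdiv : (0:ℝ) ≤ t / T := div_nonneg ht hT.le
    have hnle : (n:ℝ) ≤ t / T := Nat.floor_le hdiv
    have hnT : (n:ℝ) * T ≤ t := (le_div_iff₀ hT).1 hnle
    have hlt : t / T < (n:ℝ) + 1 := Nat.lt_floor_add_one (t/T)
    have hadj := intervalIntegral.integral_add_adjacent_intervals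
      (hΔ2.intervalIntegrable 0 ((n:ℝ)*T) : IntervalIntegrable _ MeasureTheory.volume _ _)
      (hΔ2.intervalIntegrable ((n:ℝ)*T) t : IntervalIntegrable _ MeasureTheory.volume _ _)
    have hnn : 0 ≤ ∫ s in ((n:ℝ)*T)..t, (Δ s)^2 :=
      intervalIntegral.integral_nonneg hnT (fun s _ => sq_nonneg _)
    have h1 := hImono n
    have h2 : μ * (t/T - 1) ≤ μ * n := by nlinarith
    have h3 : I ((n:ℝ)*T) ≤ I t := by
      rw [hIdef]; dsimp only; linarith [hadj, hnn]
    linarith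
  -- norm comparisons
  have hnorm_sq : ∀ x : Fin q → ℝ, ‖x‖^2 ≤ x ⬝ᵥ x := by
    intro x
    have hS : (0:ℝ) ≤ x ⬝ᵥ x := Finset.sum_nonneg fun i _ => mul_self_nonneg _
    have hle : ‖x‖ ≤ Real.sqrt (x ⬝ᵥ x) := by
      rw [pi_norm_le_iff_of_nonneg (Real.sqrt_nonneg _)]
      intro i
      rw [Real.norm_eq_abs, ← Real.sqrt_sq_eq_abs]
      apply Real.sqrt_le_sqrt
      have := Finset.single_le_sum (f := fun j => x j * x j)
        (fun j _ => mul_self_nonneg (x j)) (Finset.mem_univ i)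
      calc x i ^ 2 = x i * x i := sq (x i) ▸ rfl
        _ ≤ ∑ j, x j * x j := this
        _ = x ⬝ᵥ x := rfl
    calc ‖x‖^2 ≤ Real.sqrt (x ⬝ᵥ x)^2 := by
          apply pow_le_pow_left₀ (norm_nonneg _) hle
      _ = x ⬝ᵥ x := Real.sq_sqrt hS
  have hsq_norm : ∀ x : Fin q → ℝ, x ⬝ᵥ x ≤ ((q:ℝ)+1) * ‖x‖^2 := by
    intro x
    have hterm : ∀ i : Fin q, x i * x i ≤ ‖x‖^2 := by
      intro i
      have h1 := norm_le_pi_norm x i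
      rw [Real.norm_eq_abs] at h1
      nlinarith [abs_nonneg (x i), sq_abs (x i)]
    calc x ⬝ᵥ x ≤ ∑ _i : Fin q, ‖x‖^2 := Finset.sum_le_sum (fun i _ => hterm i)
      _ = (q:ℝ) * ‖x‖^2 := by simp [Finset.sum_const, nsmul_eq_mul]
      _ ≤ ((q:ℝ)+1) * ‖x‖^2 := by nlinarith [sq_nonneg ‖x‖]
  -- conclude
  refine ⟨Real.sqrt ((q:ℝ)+1) * Real.exp (γ*ρ*μ), by positivity, γ*ρ*μ/T, by positivity, ?_⟩
  intro t ht
  have hexp2 : ∀ x : ℝ, Real.exp x ^ 2 = Real.exp (2*x) := by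
    intro x; rw [sq, ← Real.exp_add]; ring_nf
  -- V t ≤ V 0 * exp (k*μ) * exp (-2*(γ*ρ*μ/T)*t)
  have hIt : μ * (t / T - 1) ≤ I t := hIlb t ht
  have hVt : V t ≤ V 0 * Real.exp (-(k * I t)) := by
    have h := hVle t ht
    have hE : (0:ℝ) < Real.exp (k * I t) := Real.exp_pos _
    rw [Real.exp_neg, ← div_eq_mul_inv, le_div_iff₀ hE]
    exact h
  have hexple : Real.exp (-(k * I t)) ≤ Real.exp (k*μ) * Real.exp (-(2*(γ*ρ*μ/T))*t) := by
    rw [← Real.exp_add]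
    apply Real.exp_le_exp.2
    have : -(k * I t) ≤ -(k * (μ * (t/T - 1))) := by
      apply neg_le_neg
      exact mul_le_mul_of_nonneg_left hIt hkpos.le
    calc -(k * I t) ≤ -(k * (μ * (t/T - 1))) := this
      _ = k*μ + -(2*(γ*ρ*μ/T))*t := by rw [hk]; field_simp; ring
  have hchain : ‖θh t - θ‖^2 ≤
      (((q:ℝ)+1) * ‖θh 0 - θ‖^2) * (Real.exp (k*μ) * Real.exp (-(2*(γ*ρ*μ/T))*t)) := by
    have h0 : V 0 ≤ ((q:ℝ)+1) * ‖θh 0 - θ‖^2 := hsq_norm _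
    have hEnn : (0:ℝ) ≤ Real.exp (k*μ) * Real.exp (-(2*(γ*ρ*μ/T))*t) := by positivity
    have h4 : V t ≤ V 0 * (Real.exp (k*μ) * Real.exp (-(2*(γ*ρ*μ/T))*t)) :=
      le_trans hVt (mul_le_mul_of_nonneg_left hexple (hVnn 0))
    have h5 := hnorm_sq (θh t - θ)
    nlinarith [mul_le_mul_of_nonneg_right h0 hEnn]
  have hRnn : (0:ℝ) ≤ Real.sqrt ((q:ℝ)+1) * Real.exp (γ*ρ*μ) *
      Real.exp (-(γ*ρ*μ/T) * t) * ‖θh 0 - θ‖ := by positivity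
  have hsq2 : ‖θh t - θ‖^2 ≤ (Real.sqrt ((q:ℝ)+1) * Real.exp (γ*ρ*μ) *
      Real.exp (-(γ*ρ*μ/T) * t) * ‖θh 0 - θ‖)^2 := by
    have hq1 : Real.sqrt ((q:ℝ)+1) ^ 2 = (q:ℝ)+1 := Real.sq_sqrt (by positivity)
    calc ‖θh t - θ‖^2 ≤ (((q:ℝ)+1) * ‖θh 0 - θ‖^2) *
          (Real.exp (k*μ) * Real.exp (-(2*(γ*ρ*μ/T))*t)) := hchain
      _ = (Real.sqrt ((q:ℝ)+1) * Real.exp (γ*ρ*μ) *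
          Real.exp (-(γ*ρ*μ/T) * t) * ‖θh 0 - θ‖)^2 := by
          rw [mul_pow, mul_pow, mul_pow, hq1, hexp2, hexp2]
          rw [hk]
          ring_nf
  have := Real.sqrt_le_sqrt hsq2
  rwa [Real.sqrt_sq (norm_nonneg _), Real.sqrt_sq hRnn] at this
end

section
/- Let Ω : ℝ≥0 → ℝ^{m×p} be continuous and bounded, α > 0 and f₀ > 0. Let F solve the matrix Riccati-type ODE F'(t) = −α F(t) Ω(t)ᵀ Ω(t) F(t) with F(0) = (1/f₀) I_p. Then F(t) is invertible for all t ≥ 0, F(t)⁻¹ = f₀ I_p + α ∫₀ᵗ Ω(s)ᵀΩ(s) ds, and F(t) is symmetric positive definite with F(t) ⪯ (1/f₀) I_p for all t ≥ 0. -/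
open Matrix

private lemma entry_mul_le' {p q r : ℕ} {A : Matrix (Fin p) (Fin q) ℝ} {B : Matrix (Fin q) (Fin r) ℝ}
    {a b : ℝ} (ha : 0 ≤ a) (hA : ∀ i j, |A i j| ≤ a) (hB : ∀ i j, |B i j| ≤ b)
    (i : Fin p) (j : Fin r) : |(A * B) i j| ≤ q * (a * b) := by
  rw [Matrix.mul_apply]
  calc |∑ k, A i k * B k j| ≤ ∑ k, |A i k * B k j| := Finset.abs_sum_le_sum_abs _ _
    _ ≤ ∑ _k : Fin q, a * b := by
        refine Finset.sum_le_sum fun k _ => ?_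
        rw [abs_mul]
        exact mul_le_mul (hA i k) (hB k j) (abs_nonneg _) ha
    _ = q * (a * b) := by simp [Finset.sum_const, nsmul_eq_mul]

private lemma gronwall_vanish' {E : Type*} [NormedAddCommGroup E] [NormedSpace ℝ E]
    {u : ℝ → E} {T C : ℝ} (hT : 0 ≤ T) (hu : ContinuousOn u (Set.Icc 0 T))
    (hu' : ∀ t ∈ Set.Ico 0 T, ∃ d : E, HasDerivAt u d t ∧ ‖d‖ ≤ C * ‖u t‖)
    (h0 : u 0 = 0) : u T = 0 := by
  classical
  set d : ℝ → E := fun t => if h : t ∈ Set.Ico 0 T then (hu' t h).choose else 0 with hd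
  have key := norm_le_gronwallBound_of_norm_deriv_right_le (f := u) (f' := d)
    (δ := 0) (K := C) (ε := 0) (a := 0) (b := T) hu
    (fun t ht => by
      simp only [hd, dif_pos ht]
      exact ((hu' t ht).choose_spec.1).hasDerivWithinAt)
    (by simp [h0])
    (fun t ht => by
      simp only [hd, dif_pos ht]
      simpa using (hu' t ht).choose_spec.2)
  have := key T (Set.right_mem_Icc.2 hT)
  rw [gronwallBound_ε0] at this
  simpa [norm_le_zero_iff] using this

private lemma comb' {p : ℕ} (A B C : Matrix (Fin p) (Fin p) ℝ) (α : ℝ) :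
    (-α • (A * B * A)) * C + A * (α • B) = (-α : ℝ) • (A * B * (A * C - 1)) := by
  simp only [Matrix.smul_mul, Matrix.mul_smul, mul_sub, mul_one, smul_sub, mul_assoc]
  module

/-- for the Riccati-type flow `F' = −αFΩᵀΩF`, `F(0) = (1/f₀)I`,
the matrix `F(t)` is invertible with `F(t)⁻¹ = f₀I + α∫₀ᵗΩᵀΩ`, symmetric
positive definite, and `F(t) ⪯ (1/f₀)I` for all `t ≥ 0`. -/
theorem riccati_flow_properties {m p : ℕ}
    (Ω : ℝ → Matrix (Fin m) (Fin p) ℝ) (hΩc : Continuous Ω)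
    (hΩb : ∃ M : ℝ, ∀ t : ℝ, 0 ≤ t → ∀ i j, |Ω t i j| ≤ M)
    (α f₀ : ℝ) (hα : 0 < α) (hf₀ : 0 < f₀)
    (F : ℝ → Matrix (Fin p) (Fin p) ℝ)
    (hF0 : F 0 = (1 / f₀) • (1 : Matrix (Fin p) (Fin p) ℝ))
    (hFode : ∀ t : ℝ, 0 ≤ t → ∀ i j, HasDerivAt (fun s => F s i j)
      ((-α • (F t * (Ω t)ᵀ * Ω t * F t)) i j) t) :
    ∀ t : ℝ, 0 ≤ t →
      IsUnit (F t) ∧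
      (F t)⁻¹ = f₀ • (1 : Matrix (Fin p) (Fin p) ℝ) +
        α • Matrix.of (fun i j => ∫ s in (0 : ℝ)..t, ((Ω s)ᵀ * Ω s) i j) ∧
      (F t)ᵀ = F t ∧
      (F t).PosDef ∧
      ∀ x : Fin p → ℝ, x ⬝ᵥ (F t).mulVec x ≤ (1 / f₀) * (x ⬝ᵥ x) := by
  have hΩe : ∀ k l, Continuous fun s => Ω s k l :=
    fun k l => (continuous_apply l).comp ((continuous_apply k).comp hΩc)
  have hPe : ∀ i j, Continuous fun s => ((Ω s)ᵀ * Ω s) i j := by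
    intro i j
    simp only [Matrix.mul_apply, Matrix.transpose_apply]
    exact continuous_finset_sum _ fun k _ => (hΩe k i).mul (hΩe k j)
  set Q : ℝ → Matrix (Fin p) (Fin p) ℝ :=
    fun r => Matrix.of fun i j => ∫ s in (0:ℝ)..r, ((Ω s)ᵀ * Ω s) i j with hQdef
  set G : ℝ → Matrix (Fin p) (Fin p) ℝ := fun r => f₀ • 1 + α • Q r with hGdef
  -- derivative of G entries
  have hGd : ∀ (t : ℝ) (i j : Fin p),
      HasDerivAt (fun s => G s i j) ((α • ((Ω t)ᵀ * Ω t)) i j) t := by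
    intro t i j
    have h1 : HasDerivAt (fun r => ∫ s in (0:ℝ)..r, ((Ω s)ᵀ * Ω s) i j)
        (((Ω t)ᵀ * Ω t) i j) t := ((hPe i j).integral_hasStrictDerivAt 0 t).hasDerivAt
    have h2 := (h1.const_mul α).const_add ((f₀ • (1 : Matrix (Fin p) (Fin p) ℝ)) i j)
    simp only [hGdef, hQdef, Matrix.add_apply, Matrix.smul_apply, Matrix.of_apply, smul_eq_mul]
    exact h2
  have hG0 : G 0 = f₀ • 1 := by
    simp only [hGdef, hQdef]
    ext i j
    simp [intervalIntegral.integral_same]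
  -- the fundamental identity : F t * G t = 1 for t ≥ 0
  have key : ∀ T : ℝ, 0 ≤ T → F T * G T = 1 := by
    intro T hT
    obtain ⟨M, hM⟩ := hΩb
    set Mv := max M 0 with hMv
    have hMv0 : 0 ≤ Mv := le_max_right _ _
    have hΩbd : ∀ t : ℝ, 0 ≤ t → ∀ i j, |Ω t i j| ≤ Mv :=
      fun t ht i j => (hM t ht i j).trans (le_max_left _ _)
    have hPbd : ∀ t : ℝ, 0 ≤ t → ∀ i j, |((Ω t)ᵀ * Ω t) i j| ≤ m * (Mv * Mv) := by
      intro t ht i j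
      exact entry_mul_le' hMv0 (fun i j => hΩbd t ht j i) (hΩbd t ht) i j
    -- bound on F on [0,T]
    have hFcO : ∀ (i j : Fin p), ContinuousOn (fun s => F s i j) (Set.Icc 0 T) :=
      fun i j t ht => ((hFode t ht.1 i j).continuousAt).continuousWithinAt
    have hFPic : ContinuousOn (fun s => (fun i j => F s i j : Fin p → Fin p → ℝ)) (Set.Icc 0 T) :=
      continuousOn_pi.2 fun i => continuousOn_pi.2 fun j => hFcO i j
    obtain ⟨CF, hCF⟩ := isCompact_Icc.exists_bound_of_continuousOn hFPic
    set CFv := max CF 0 with hCFv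
    have hCFv0 : 0 ≤ CFv := le_max_right _ _
    have hFbd : ∀ t ∈ Set.Icc (0:ℝ) T, ∀ i j, |F t i j| ≤ CFv := by
      intro t ht i j
      have h2 := norm_le_pi_norm (G := fun _ : Fin p => Fin p → ℝ) (fun i j => F t i j) i
      have h1 : |F t i j| ≤ ‖(fun i j => F t i j : Fin p → Fin p → ℝ)‖ :=
        le_trans (norm_le_pi_norm (fun j' => F t i j') j) h2
      exact h1.trans ((hCF t ht).trans (le_max_left _ _))
    set c₁ : ℝ := p * (CFv * (m * (Mv * Mv))) with hc₁
    have hc₁0 : 0 ≤ c₁ := by positivity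
    set C : ℝ := α * (p * c₁) with hC
    -- the function u
    set u : ℝ → (Fin p → Fin p → ℝ) := fun s i j => (F s * G s - 1) i j with hu
    have hFG0 : F 0 * G 0 = 1 := by
      rw [hF0, hG0, Matrix.smul_mul, one_mul, smul_smul, one_div, inv_mul_cancel₀ hf₀.ne',
        one_smul]
    have hu0 : u 0 = 0 := by
      funext i j
      simp [hu, hFG0]
    have huT := gronwall_vanish' (u := u) (C := C) hT ?cont ?deriv hu0
    · have : F T * G T - 1 = 0 := by
        ext i j
        exact congrFun (congrFun huT i) j
      exact sub_eq_zero.mp this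
    case cont =>
      refine continuousOn_pi.2 fun i => continuousOn_pi.2 fun j => ?_
      have : ContinuousOn (fun s => (∑ k, F s i k * G s k j) - (1 : Matrix (Fin p) (Fin p) ℝ) i j)
          (Set.Icc 0 T) := by
        refine ContinuousOn.sub ?_ continuousOn_const
        refine continuousOn_finset_sum _ fun k _ => (hFcO i k).mul ?_
        exact (continuous_iff_continuousAt.2 fun t => (hGd t k j).continuousAt).continuousOn
      simpa only [hu, Matrix.sub_apply, Matrix.mul_apply] using this
    case deriv =>
      intro t ht
      have ht0 : (0:ℝ) ≤ t := ht.1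
      refine ⟨fun i j => ((-α : ℝ) • (F t * ((Ω t)ᵀ * Ω t) * (F t * G t - 1)) : Matrix (Fin p) (Fin p) ℝ) i j, ?_, ?_⟩
      · -- derivative
        refine hasDerivAt_pi.2 fun i => hasDerivAt_pi.2 fun j => ?_
        have hF' : ∀ k, HasDerivAt (fun s => F s i k)
            ((-α • (F t * ((Ω t)ᵀ * Ω t) * F t)) i k) t := by
          intro k
          have := hFode t ht0 i k
          rwa [Matrix.mul_assoc (F t) (Ω t)ᵀ (Ω t)] at this
        have hsum : HasDerivAt (fun s => ∑ k, F s i k * G s k j)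
            (∑ k, ((-α • (F t * ((Ω t)ᵀ * Ω t) * F t)) i k * G t k j
              + F t i k * (α • ((Ω t)ᵀ * Ω t)) k j)) t :=
          HasDerivAt.fun_sum fun k _ => (hF' k).mul (hGd t k j)
        have hder := hsum.sub_const ((1 : Matrix (Fin p) (Fin p) ℝ) i j)
        have heq : (∑ k, ((-α • (F t * ((Ω t)ᵀ * Ω t) * F t)) i k * G t k j
              + F t i k * (α • ((Ω t)ᵀ * Ω t)) k j))
            = ((-α : ℝ) • (F t * ((Ω t)ᵀ * Ω t) * (F t * G t - 1)) : Matrix (Fin p) (Fin p) ℝ) i j := by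
          rw [← comb' (F t) ((Ω t)ᵀ * Ω t) (G t) α, Matrix.add_apply, Matrix.mul_apply,
            Matrix.mul_apply, ← Finset.sum_add_distrib]
        rw [← heq]
        simpa only [hu, Matrix.sub_apply, Matrix.mul_apply] using hder
      · -- norm bound
        have hub : ∀ k j', |(F t * G t - 1) k j'| ≤ ‖u t‖ := by
          intro k j'
          have : |u t k j'| ≤ ‖u t‖ :=
            le_trans (norm_le_pi_norm (u t k) j') (norm_le_pi_norm (u t) k)
          simpa [hu] using this
        have hFP : ∀ i k, |(F t * ((Ω t)ᵀ * Ω t)) i k| ≤ c₁ := by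
          intro i k
          have := entry_mul_le' hCFv0 (hFbd t ⟨ht.1, ht.2.le⟩) (hPbd t ht0) i k
          simpa [hc₁] using this
        have hbig : ∀ i j, |(((F t * ((Ω t)ᵀ * Ω t)) * (F t * G t - 1) : Matrix (Fin p) (Fin p) ℝ)) i j| ≤ p * (c₁ * ‖u t‖) :=
          fun i j => entry_mul_le' hc₁0 hFP hub i j
        have hCu : (0:ℝ) ≤ C * ‖u t‖ := by
          have : (0:ℝ) ≤ C := by rw [hC]; positivity
          exact mul_nonneg this (norm_nonneg _)
        rw [pi_norm_le_iff_of_nonneg hCu]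
        intro i
        rw [pi_norm_le_iff_of_nonneg hCu]
        intro j
        have : |((-α : ℝ) • (F t * ((Ω t)ᵀ * Ω t) * (F t * G t - 1)) : Matrix (Fin p) (Fin p) ℝ) i j|
            ≤ α * (p * (c₁ * ‖u t‖)) := by
          rw [Matrix.smul_apply, smul_eq_mul, abs_mul, abs_neg, abs_of_pos hα]
          exact mul_le_mul_of_nonneg_left (hbig i j) hα.le
        calc ‖((-α : ℝ) • (F t * ((Ω t)ᵀ * Ω t) * (F t * G t - 1)) : Matrix (Fin p) (Fin p) ℝ) i j‖
            ≤ α * (p * (c₁ * ‖u t‖)) := by rw [Real.norm_eq_abs]; exact this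
          _ = C * ‖u t‖ := by rw [hC]; ring
  -- conclusions
  intro t ht
  have hFG : F t * G t = 1 := key t ht
  have hGF : G t * F t = 1 := mul_eq_one_comm.mp hFG
  have hUnit : IsUnit (F t) := ⟨⟨F t, G t, hFG, hGF⟩, rfl⟩
  have hinv : (F t)⁻¹ = G t := Matrix.inv_eq_right_inv hFG
  have hGinv : (G t)⁻¹ = F t := Matrix.inv_eq_right_inv hGF
  have hQsym : (Q t)ᵀ = Q t := by
    ext i j
    simp only [hQdef, Matrix.transpose_apply, Matrix.of_apply]
    have : (fun s => ((Ω s)ᵀ * Ω s) j i) = fun s => ((Ω s)ᵀ * Ω s) i j := by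
      funext s
      rw [Matrix.mul_apply, Matrix.mul_apply]
      exact Finset.sum_congr rfl fun k _ => by
        rw [Matrix.transpose_apply, Matrix.transpose_apply, mul_comm]
    rw [this]
  have hGsym : (G t)ᵀ = G t := by
    simp only [hGdef]
    rw [Matrix.transpose_add, Matrix.transpose_smul, Matrix.transpose_smul,
      Matrix.transpose_one, hQsym]
  have hFsym : (F t)ᵀ = F t := by
    rw [← hGinv, Matrix.transpose_nonsing_inv, hGsym]
  -- quadratic form of Q
  have hQuad : ∀ z : Fin p → ℝ,
      z ⬝ᵥ Q t *ᵥ z = ∫ s in (0:ℝ)..t, z ⬝ᵥ ((Ω s)ᵀ * Ω s) *ᵥ z := by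
    intro z
    have hc : ∀ (i j : Fin p), Continuous fun s => z i * (((Ω s)ᵀ * Ω s) i j * z j) :=
      fun i j => continuous_const.mul ((hPe i j).mul continuous_const)
    have step : (∫ s in (0:ℝ)..t, z ⬝ᵥ ((Ω s)ᵀ * Ω s) *ᵥ z)
        = ∑ i, ∑ j, ∫ s in (0:ℝ)..t, z i * (((Ω s)ᵀ * Ω s) i j * z j) := by
      rw [show (fun s => z ⬝ᵥ ((Ω s)ᵀ * Ω s) *ᵥ z)
          = fun s => ∑ i, ∑ j, z i * (((Ω s)ᵀ * Ω s) i j * z j) from funext fun s => by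
        simp [dotProduct, Matrix.mulVec, Finset.mul_sum]]
      rw [intervalIntegral.integral_finset_sum (fun i _ =>
        Continuous.intervalIntegrable (continuous_finset_sum _ fun j _ => hc i j) _ _)]
      exact Finset.sum_congr rfl fun i _ =>
        intervalIntegral.integral_finset_sum (fun j _ => (hc i j).intervalIntegrable _ _)
    have lhs : z ⬝ᵥ Q t *ᵥ z
        = ∑ i, ∑ j, ∫ s in (0:ℝ)..t, z i * (((Ω s)ᵀ * Ω s) i j * z j) := by
      simp only [hQdef, dotProduct, Matrix.mulVec, Matrix.of_apply]
      refine Finset.sum_congr rfl fun i _ => ?_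
      rw [Finset.mul_sum]
      refine Finset.sum_congr rfl fun j _ => ?_
      rw [← intervalIntegral.integral_mul_const, ← intervalIntegral.integral_const_mul]
    rw [lhs, step]
  have hQnn : ∀ z : Fin p → ℝ, 0 ≤ z ⬝ᵥ Q t *ᵥ z := by
    intro z
    rw [hQuad z]
    refine intervalIntegral.integral_nonneg ht fun s _ => ?_
    have hps : z ⬝ᵥ ((Ω s)ᵀ * Ω s) *ᵥ z = (Ω s *ᵥ z) ⬝ᵥ (Ω s *ᵥ z) := by
      rw [← Matrix.mulVec_mulVec, Matrix.dotProduct_mulVec, Matrix.vecMul_transpose]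
    rw [hps]
    exact Finset.sum_nonneg fun k _ => mul_self_nonneg _
  have hdotself : ∀ z : Fin p → ℝ, 0 ≤ z ⬝ᵥ z :=
    fun z => Finset.sum_nonneg fun k _ => mul_self_nonneg _
  -- G positive definite
  have hGpos : (G t).PosDef := by
    refine posDef_iff_dotProduct_mulVec.2 ⟨?_, fun x hx => ?_⟩
    · show (G t)ᴴ = G t
      rw [Matrix.conjTranspose_eq_transpose_of_trivial, hGsym]
    · have hstar : star x = x := funext fun i => rfl
      rw [hstar]
      have hxx : 0 < x ⬝ᵥ x := by
        obtain ⟨i, hi⟩ := Function.ne_iff.mp hx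
        refine Finset.sum_pos' (fun k _ => mul_self_nonneg _) ⟨i, Finset.mem_univ i, ?_⟩
        exact mul_self_pos.mpr hi
      have hexp : x ⬝ᵥ G t *ᵥ x = f₀ * (x ⬝ᵥ x) + α * (x ⬝ᵥ Q t *ᵥ x) := by
        simp only [hGdef, Matrix.add_mulVec, Matrix.smul_mulVec, Matrix.one_mulVec,
          dotProduct_add, dotProduct_smul, smul_eq_mul]
      rw [hexp]
      have := hQnn x
      nlinarith [mul_pos hf₀ hxx]
  have hFpos : (F t).PosDef := hGinv ▸ hGpos.inv
  refine ⟨hUnit, ?_, hFsym, hFpos, ?_⟩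
  · rw [hinv]
  · intro x
    have hxy : G t *ᵥ (F t *ᵥ x) = x := by
      rw [Matrix.mulVec_mulVec, hGF, Matrix.one_mulVec]
    set y : Fin p → ℝ := F t *ᵥ x with hy
    have hGy : G t *ᵥ y = f₀ • y + α • (Q t *ᵥ y) := by
      simp only [hGdef, Matrix.add_mulVec, Matrix.smul_mulVec, Matrix.one_mulVec]
    have hcomm : (Q t *ᵥ y) ⬝ᵥ y = y ⬝ᵥ (Q t *ᵥ y) := dotProduct_comm _ _
    have hq : 0 ≤ y ⬝ᵥ (Q t *ᵥ y) := hQnn y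
    have hr : 0 ≤ (Q t *ᵥ y) ⬝ᵥ (Q t *ᵥ y) := hdotself _
    have hyy : 0 ≤ y ⬝ᵥ y := hdotself y
    have hL : x ⬝ᵥ F t *ᵥ x = f₀ * (y ⬝ᵥ y) + α * (y ⬝ᵥ (Q t *ᵥ y)) := by
      calc x ⬝ᵥ F t *ᵥ x = x ⬝ᵥ y := by rw [hy]
        _ = y ⬝ᵥ x := dotProduct_comm _ _
        _ = y ⬝ᵥ (G t *ᵥ y) := by rw [hxy]
        _ = f₀ * (y ⬝ᵥ y) + α * (y ⬝ᵥ (Q t *ᵥ y)) := by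
            rw [hGy]
            simp only [dotProduct_add, dotProduct_smul, smul_eq_mul]
    have hR : x ⬝ᵥ x = f₀ * f₀ * (y ⬝ᵥ y) + 2 * α * f₀ * (y ⬝ᵥ (Q t *ᵥ y))
        + α * α * ((Q t *ᵥ y) ⬝ᵥ (Q t *ᵥ y)) := by
      calc x ⬝ᵥ x = (G t *ᵥ y) ⬝ᵥ (G t *ᵥ y) := by rw [hxy]
        _ = _ := by
            rw [hGy]
            simp only [dotProduct_add, add_dotProduct, dotProduct_smul,
              smul_dotProduct, smul_eq_mul, hcomm]
            ring
    rw [hL, hR, one_div_mul_eq_div, le_div_iff₀ hf₀]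
    nlinarith [mul_nonneg (mul_nonneg hα.le hf₀.le) hq,
      mul_nonneg (mul_nonneg hα.le hα.le) hr]
end

section
/- With F as above (F' = −αFΩᵀΩF, F(0) = (1/f₀)I_p), suppose Ω satisfies the interval excitation condition ∫_{t₀}^{t₀+t_c} Ω(s)ᵀΩ(s) ds ⪰ C_c I_p for some constants C_c > 0 and t_c ≥ t₀ > 0. Then for all t ≥ t₀ + t_c, the matrix I_p − f₀ F(t) is positive definite; in particular Δ(t) := det(I_p − f₀F(t)) > 0 for all t ≥ t₀ + t_c. -/
set_option maxHeartbeats 1000000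

open Matrix MeasureTheory intervalIntegral Set

namespace RiccatiAux

variable {m p : ℕ}

/-- Entries of `ΩᵀΩ` are continuous. -/
lemma contW (Ω : ℝ → Matrix (Fin m) (Fin p) ℝ) (hΩc : Continuous Ω) (i j : Fin p) :
    Continuous fun s => ((Ω s)ᵀ * Ω s) i j := by
  simp only [Matrix.mul_apply, Matrix.transpose_apply]
  exact continuous_finset_sum _ fun k _ =>
    (hΩc.matrix_elem k i).mul (hΩc.matrix_elem k j)

/-- quadratic form of the entrywise integral matrix equals integral of the quadratic form -/
lemma quad_integral (W : ℝ → Matrix (Fin p) (Fin p) ℝ)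
    (hW : ∀ i j, Continuous fun s => W s i j) (a b : ℝ) (y : Fin p → ℝ) :
    y ⬝ᵥ ((Matrix.of fun i j => ∫ s in a..b, W s i j) *ᵥ y)
      = ∫ s in a..b, y ⬝ᵥ (W s *ᵥ y) := by
  have hint : ∀ i j : Fin p, IntervalIntegrable (fun s => W s i j) volume a b :=
    fun i j => (hW i j).intervalIntegrable a b
  have gInt : ∀ i j : Fin p,
      IntervalIntegrable (fun s => y i * (W s i j * y j)) volume a b :=
    fun i j => ((hint i j).mul_const (y j)).const_mul (y i)
  have hsum : ∀ i, IntervalIntegrable (fun s => ∑ j, y i * (W s i j * y j)) volume a b :=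
    fun i => (continuous_finset_sum _ fun j _ =>
      continuous_const.mul ((hW i j).mul continuous_const)).intervalIntegrable a b
  calc y ⬝ᵥ ((Matrix.of fun i j => ∫ s in a..b, W s i j) *ᵥ y)
      = ∑ i, ∑ j, y i * ((∫ s in a..b, W s i j) * y j) := by
        simp [dotProduct, Matrix.mulVec, Finset.mul_sum]
    _ = ∑ i, ∑ j, ∫ s in a..b, y i * (W s i j * y j) := by
        refine Finset.sum_congr rfl fun i _ => Finset.sum_congr rfl fun j _ => ?_
        rw [intervalIntegral.integral_const_mul, intervalIntegral.integral_mul_const]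
    _ = ∫ s in a..b, ∑ i, ∑ j, y i * (W s i j * y j) := by
        rw [intervalIntegral.integral_finset_sum (f := fun i s => ∑ j, y i * (W s i j * y j))
            (fun i _ => hsum i)]
        refine Finset.sum_congr rfl fun i _ => ?_
        exact (intervalIntegral.integral_finset_sum (fun j _ => gInt i j)).symm
    _ = ∫ s in a..b, y ⬝ᵥ (W s *ᵥ y) := by
        refine intervalIntegral.integral_congr fun s _ => ?_
        simp [dotProduct, Matrix.mulVec, Finset.mul_sum]

/-- the quadratic form of a continuous matrix function is continuous -/
lemma quad_cont (W : ℝ → Matrix (Fin p) (Fin p) ℝ)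
    (hW : ∀ i j, Continuous fun s => W s i j) (y : Fin p → ℝ) :
    Continuous fun s => y ⬝ᵥ (W s *ᵥ y) := by
  simp only [dotProduct, Matrix.mulVec]
  exact continuous_finset_sum _ fun i _ =>
    continuous_const.mul (continuous_finset_sum _ fun j _ =>
      (hW i j).mul continuous_const)

/-- The entrywise integral matrix. -/
noncomputable def Smat (W : ℝ → Matrix (Fin p) (Fin p) ℝ) (t : ℝ) :
    Matrix (Fin p) (Fin p) ℝ :=
  Matrix.of fun i j => ∫ s in (0:ℝ)..t, W s i j

lemma Smat_quad (W : ℝ → Matrix (Fin p) (Fin p) ℝ)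
    (hW : ∀ i j, Continuous fun s => W s i j) (t : ℝ) (y : Fin p → ℝ) :
    y ⬝ᵥ (Smat W t *ᵥ y) = ∫ s in (0:ℝ)..t, y ⬝ᵥ (W s *ᵥ y) :=
  quad_integral W hW 0 t y

lemma Smat_deriv (W : ℝ → Matrix (Fin p) (Fin p) ℝ)
    (hW : ∀ i j, Continuous fun s => W s i j) (t : ℝ) (i j : Fin p) :
    HasDerivAt (fun u => Smat W u i j) (W t i j) t :=
  ((hW i j).integral_hasStrictDerivAt 0 t).hasDerivAt

lemma Smat_symm (W : ℝ → Matrix (Fin p) (Fin p) ℝ)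
    (hsymm : ∀ s, (W s)ᵀ = W s) (t : ℝ) : (Smat W t)ᵀ = Smat W t := by
  ext i j
  simp only [Smat, Matrix.transpose_apply, Matrix.of_apply]
  congr 1
  funext s
  conv_rhs => rw [← hsymm s]
  exact (Matrix.transpose_apply _ _ _).symm

lemma Smat_zero (W : ℝ → Matrix (Fin p) (Fin p) ℝ) : Smat W 0 = 0 := by
  ext i j
  simp [Smat]

/-- entrywise sup-norm bound for matrix products, phrased with `Pi` norms -/
lemma norm_matmul_le (E A : Fin p → Fin p → ℝ) :
    ‖(fun i j => ∑ k, E i k * A k j : Fin p → Fin p → ℝ)‖ ≤ (p : ℝ) * (‖E‖ * ‖A‖) := by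
  have hnn : (0:ℝ) ≤ (p : ℝ) * (‖E‖ * ‖A‖) := by positivity
  rw [pi_norm_le_iff_of_nonneg hnn]
  intro i
  rw [pi_norm_le_iff_of_nonneg hnn]
  intro j
  have hE : ∀ a b, |E a b| ≤ ‖E‖ := fun a b =>
    le_trans (norm_le_pi_norm (E a) b) (norm_le_pi_norm E a)
  have hA : ∀ a b, |A a b| ≤ ‖A‖ := fun a b =>
    le_trans (norm_le_pi_norm (A a) b) (norm_le_pi_norm A a)
  calc ‖∑ k, E i k * A k j‖ ≤ ∑ k, |E i k * A k j| := by
        rw [Real.norm_eq_abs]; exact Finset.abs_sum_le_sum_abs _ _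
    _ ≤ ∑ _k : Fin p, ‖E‖ * ‖A‖ := by
        refine Finset.sum_le_sum fun k _ => ?_
        rw [abs_mul]
        exact mul_le_mul (hE i k) (hA k j) (abs_nonneg _) ((abs_nonneg _).trans (hE i k))
    _ = (p : ℝ) * (‖E‖ * ‖A‖) := by
        simp [Finset.sum_const, Finset.card_univ, nsmul_eq_mul]

/-- Main uniqueness step: `(f₀ I + α S(t)) F(t) = 1` for `t ≥ 0`. -/
lemma key (Ω : ℝ → Matrix (Fin m) (Fin p) ℝ) (hΩc : Continuous Ω)
    (α f₀ : ℝ) (hα : 0 < α) (hf₀ : 0 < f₀)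
    (F : ℝ → Matrix (Fin p) (Fin p) ℝ)
    (hF0 : F 0 = (1 / f₀) • (1 : Matrix (Fin p) (Fin p) ℝ))
    (hFode : ∀ t : ℝ, 0 ≤ t → ∀ i j, HasDerivAt (fun s => F s i j)
      ((-α • (F t * (Ω t)ᵀ * Ω t * F t)) i j) t) :
    ∀ t : ℝ, 0 ≤ t →
      (f₀ • (1 : Matrix (Fin p) (Fin p) ℝ)
        + α • Smat (fun s => (Ω s)ᵀ * Ω s) t) * F t = 1 := by
  set W : ℝ → Matrix (Fin p) (Fin p) ℝ := fun s => (Ω s)ᵀ * Ω s with hWdef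
  have hW : ∀ i j, Continuous fun s => W s i j := contW Ω hΩc
  set G : ℝ → Matrix (Fin p) (Fin p) ℝ :=
    fun u => f₀ • (1 : Matrix (Fin p) (Fin p) ℝ) + α • Smat W u with hGdef
  have hGd : ∀ t (i j : Fin p), HasDerivAt (fun u => G u i j)
      ((α • W t) i j) t := by
    intro t i j
    have h1 := ((Smat_deriv W hW t i j).const_mul α).const_add
      ((f₀ • (1 : Matrix (Fin p) (Fin p) ℝ)) i j)
    have h2 : (fun u => G u i j)
        = fun u => (f₀ • (1 : Matrix (Fin p) (Fin p) ℝ)) i j + α * Smat W u i j := by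
      funext u
      simp [hGdef, Matrix.add_apply, Matrix.smul_apply, smul_eq_mul]
    rw [h2]
    simpa [Matrix.smul_apply, smul_eq_mul] using h1
  have hGFd : ∀ t : ℝ, 0 ≤ t → ∀ i j : Fin p,
      HasDerivAt (fun u => (G u * F u) i j)
        ((α • (W t * F t) + G t * (-α • (F t * (Ω t)ᵀ * Ω t * F t))) i j) t := by
    intro t ht i j
    have h1 : HasDerivAt (fun u => ∑ k, G u i k * F u k j)
        (∑ k, ((α • W t) i k * F t k j
          + G t i k * ((-α • (F t * (Ω t)ᵀ * Ω t * F t)) k j))) t :=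
      HasDerivAt.fun_sum fun k _ => (hGd t i k).mul (hFode t ht k j)
    have e1 : (fun u => (G u * F u) i j) = fun u => ∑ k, G u i k * F u k j := by
      funext u; rw [Matrix.mul_apply]
    rw [e1]
    convert h1 using 1
    simp only [Matrix.add_apply, Matrix.mul_apply, Matrix.smul_apply, smul_eq_mul,
      Finset.mul_sum, Finset.sum_add_distrib, mul_assoc]
  have hD : ∀ t : ℝ,
      α • (W t * F t) + G t * (-α • (F t * (Ω t)ᵀ * Ω t * F t))
        = (-α) • ((G t * F t - 1) * (W t * F t)) := by
    intro t
    have h2 : F t * (Ω t)ᵀ * Ω t * F t = F t * (W t * F t) := by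
      simp [hWdef, Matrix.mul_assoc]
    rw [h2, Matrix.mul_smul, ← Matrix.mul_assoc]
    rw [Matrix.sub_mul, Matrix.one_mul, smul_sub]
    simp [neg_smul]
    exact add_comm _ _
  set e : ℝ → (Fin p → Fin p → ℝ) :=
    fun u => fun i j => (G u * F u - 1) i j with hedef
  set e' : ℝ → (Fin p → Fin p → ℝ) :=
    fun u => fun i j => ((-α) • ((G u * F u - 1) * (W u * F u))) i j with he'def
  have hed : ∀ t : ℝ, 0 ≤ t → HasDerivAt e (e' t) t := by
    intro t ht
    rw [hasDerivAt_pi]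
    intro i
    rw [hasDerivAt_pi]
    intro j
    have h3 := (hGFd t ht i j).sub_const ((1 : Matrix (Fin p) (Fin p) ℝ) i j)
    rw [hD t] at h3
    have e2 : (fun u => (G u * F u) i j - (1 : Matrix (Fin p) (Fin p) ℝ) i j)
        = fun u => e u i j := by
      funext u; simp [hedef, Matrix.sub_apply]
    rw [e2] at h3
    exact h3
  have he0 : e 0 = 0 := by
    have hG0 : G 0 * F 0 = 1 := by
      rw [hGdef]
      simp only [Smat_zero, smul_zero, add_zero, hF0]
      rw [Matrix.smul_mul, Matrix.mul_smul, smul_smul, Matrix.one_mul]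
      rw [mul_one_div, div_self hf₀.ne', one_smul]
    funext i j
    simp [hedef, hG0, Matrix.sub_apply]
  have hzero : ∀ T : ℝ, 0 ≤ T → e T = 0 := by
    intro T hT
    have hFcont : ∀ i j : Fin p, ContinuousOn (fun u => F u i j) (Icc 0 T) :=
      fun i j u hu => ((hFode u hu.1 i j).continuousAt).continuousWithinAt
    have hAcont : ContinuousOn
        (fun u => (fun i j => (W u * F u) i j : Fin p → Fin p → ℝ)) (Icc 0 T) := by
      rw [continuousOn_pi]
      intro i
      rw [continuousOn_pi]
      intro j
      have h4 : (fun u => (W u * F u) i j) = fun u => ∑ k, W u i k * F u k j := by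
        funext u; rw [Matrix.mul_apply]
      rw [h4]
      exact continuousOn_finset_sum _ fun k _ => ((hW i k).continuousOn.mul (hFcont k j))
    obtain ⟨C, hC⟩ := isCompact_Icc.exists_bound_of_continuousOn hAcont
    set C' : ℝ := max C 0 with hC'def
    set K : ℝ := α * ((p : ℝ) * C') with hKdef
    have hbound : ∀ u ∈ Ico (0:ℝ) T, ‖e' u‖ ≤ K * ‖e u‖ + 0 := by
      intro u hu
      have hu' : u ∈ Icc (0:ℝ) T := ⟨hu.1, hu.2.le⟩
      have hAb : ‖(fun i j => (W u * F u) i j : Fin p → Fin p → ℝ)‖ ≤ C' :=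
        (hC _ hu').trans (le_max_left _ _)
      have hsm : e' u = (-α) •
          (fun i j => ((G u * F u - 1) * (W u * F u)) i j : Fin p → Fin p → ℝ) := by
        funext i j
        simp [he'def, Matrix.smul_apply]
      have hmm : (fun i j => ((G u * F u - 1) * (W u * F u)) i j : Fin p → Fin p → ℝ)
          = fun i j => ∑ k, e u i k *
              (fun a b => (W u * F u) a b : Fin p → Fin p → ℝ) k j := by
        funext i j
        rw [Matrix.mul_apply]
      have h5 : ‖(fun i j => ((G u * F u - 1) * (W u * F u)) i j : Fin p → Fin p → ℝ)‖
          ≤ (p : ℝ) * (‖e u‖ *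
              ‖(fun a b => (W u * F u) a b : Fin p → Fin p → ℝ)‖) := by
        rw [hmm]
        exact norm_matmul_le (e u) _
      rw [hsm, norm_smul, add_zero]
      have h6 : ‖(-α : ℝ)‖ = α := by rw [Real.norm_eq_abs, abs_neg, abs_of_pos hα]
      rw [h6, hKdef]
      calc α * ‖(fun i j => ((G u * F u - 1) * (W u * F u)) i j : Fin p → Fin p → ℝ)‖
          ≤ α * ((p : ℝ) * (‖e u‖ * C')) := by
            refine mul_le_mul_of_nonneg_left (h5.trans ?_) hα.le
            refine mul_le_mul_of_nonneg_left ?_ (by positivity)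
            exact mul_le_mul_of_nonneg_left hAb (norm_nonneg _)
        _ = α * ((p : ℝ) * C') * ‖e u‖ := by ring
    have hecont : ContinuousOn e (Icc 0 T) :=
      fun u hu => (hed u hu.1).continuousAt.continuousWithinAt
    have hgron := norm_le_gronwallBound_of_norm_deriv_right_le (δ := 0) (ε := 0)
      hecont (fun x hx => (hed x hx.1).hasDerivWithinAt)
      (by rw [he0]; simp) hbound
    have h7 := hgron T ⟨hT, le_rfl⟩
    rw [show gronwallBound 0 K 0 (T - 0) = 0 by simp [gronwallBound]] at h7
    exact norm_le_zero_iff.mp h7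
  intro t ht
  have h8 := hzero t ht
  ext i j
  have h9 : e t i j = 0 := by rw [h8]; rfl
  have h10 : (G t * F t - 1) i j = 0 := h9
  rw [Matrix.sub_apply] at h10
  have := sub_eq_zero.mp h10
  simpa [hGdef] using this

end RiccatiAux

open RiccatiAux in
/-- under interval excitation of `Ω`, the matrix `I − f₀F(t)`
is positive definite for all `t ≥ t₀ + t_c`; in particular its determinant
`Δ(t)` is positive there. -/
theorem riccati_flow_interval_excitation {m p : ℕ}
    (Ω : ℝ → Matrix (Fin m) (Fin p) ℝ) (hΩc : Continuous Ω)
    (α f₀ : ℝ) (hα : 0 < α) (hf₀ : 0 < f₀)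
    (F : ℝ → Matrix (Fin p) (Fin p) ℝ)
    (hF0 : F 0 = (1 / f₀) • (1 : Matrix (Fin p) (Fin p) ℝ))
    (hFode : ∀ t : ℝ, 0 ≤ t → ∀ i j, HasDerivAt (fun s => F s i j)
      ((-α • (F t * (Ω t)ᵀ * Ω t * F t)) i j) t)
    (Cc t₀ tc : ℝ) (hCc : 0 < Cc) (ht₀ : 0 < t₀) (htc : t₀ ≤ tc)
    (hIE : ∀ x : Fin p → ℝ,
      Cc * (x ⬝ᵥ x) ≤
        x ⬝ᵥ (Matrix.of fun i j =>
          ∫ s in t₀..(t₀ + tc), ((Ω s)ᵀ * Ω s) i j).mulVec x) :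
    ∀ t : ℝ, t₀ + tc ≤ t →
      ((1 : Matrix (Fin p) (Fin p) ℝ) - f₀ • F t).PosDef ∧
      0 < ((1 : Matrix (Fin p) (Fin p) ℝ) - f₀ • F t).det := by
  intro t ht
  have hW : ∀ i j, Continuous fun s => ((fun s => (Ω s)ᵀ * Ω s) s) i j := contW Ω hΩc
  have hWsymm : ∀ s, ((fun s => (Ω s)ᵀ * Ω s) s)ᵀ = (fun s => (Ω s)ᵀ * Ω s) s := by
    intro s
    simp [Matrix.transpose_mul]
  have ht0 : (0:ℝ) ≤ t := by linarith
  set S : Matrix (Fin p) (Fin p) ℝ := Smat (fun s => (Ω s)ᵀ * Ω s) t with hSdef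
  set G : Matrix (Fin p) (Fin p) ℝ := f₀ • 1 + α • S with hGdef
  have hGF : G * F t = 1 := key Ω hΩc α f₀ hα hf₀ F hF0 hFode t ht0
  have hSsym : Sᵀ = S := Smat_symm _ hWsymm t
  have hGsym : Gᵀ = G := by
    rw [hGdef]
    rw [Matrix.transpose_add, Matrix.transpose_smul, Matrix.transpose_smul,
      Matrix.transpose_one, hSsym]
  have hFsym : (F t)ᵀ = F t := by
    have h1 : (F t)ᵀ * G = 1 := by
      have h0 := congrArg Matrix.transpose hGF
      rwa [Matrix.transpose_mul, Matrix.transpose_one, hGsym] at h0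
    calc (F t)ᵀ = (F t)ᵀ * (G * F t) := by rw [hGF, Matrix.mul_one]
      _ = ((F t)ᵀ * G) * F t := by rw [Matrix.mul_assoc]
      _ = F t := by rw [h1, Matrix.one_mul]
  have hMherm : ((1 : Matrix (Fin p) (Fin p) ℝ) - f₀ • F t).IsHermitian := by
    show _ᴴ = _
    rw [Matrix.conjTranspose_eq_transpose_of_trivial, Matrix.transpose_sub,
      Matrix.transpose_smul, Matrix.transpose_one, hFsym]
  have hMpos : ∀ x : Fin p → ℝ, x ≠ 0 →
      0 < star x ⬝ᵥ (((1 : Matrix (Fin p) (Fin p) ℝ) - f₀ • F t) *ᵥ x) := by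
    intro x hx
    set y : Fin p → ℝ := F t *ᵥ x with hydef
    have hxy : G *ᵥ y = x := by
      rw [hydef, Matrix.mulVec_mulVec, hGF, Matrix.one_mulVec]
    have hy0 : y ≠ 0 := by
      intro h
      apply hx
      rw [← hxy, h, Matrix.mulVec_zero]
    set z : Fin p → ℝ := S *ᵥ y with hzdef
    have hGy : G *ᵥ y = f₀ • y + α • z := by
      rw [hGdef, Matrix.add_mulVec, Matrix.smul_mulVec, Matrix.one_mulVec,
        Matrix.smul_mulVec, hzdef]
    have hx2 : x = f₀ • y + α • z := by rw [← hxy, hGy]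
    have hMx : ((1 : Matrix (Fin p) (Fin p) ℝ) - f₀ • F t) *ᵥ x = α • z := by
      rw [Matrix.sub_mulVec, Matrix.one_mulVec, Matrix.smul_mulVec, ← hydef]
      rw [hx2]
      abel
    -- value of the quadratic form
    have hq : star x ⬝ᵥ (((1 : Matrix (Fin p) (Fin p) ℝ) - f₀ • F t) *ᵥ x)
        = f₀ * (α * (y ⬝ᵥ z)) + α * (α * (z ⬝ᵥ z)) := by
      rw [star_trivial, hMx]
      conv_lhs => rw [hx2]
      rw [add_dotProduct, smul_dotProduct, smul_dotProduct,
        dotProduct_smul, dotProduct_smul]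
      simp [smul_eq_mul]
    -- positivity facts
    have hzz : 0 ≤ z ⬝ᵥ z := by
      simp only [dotProduct]
      exact Finset.sum_nonneg fun i _ => mul_self_nonneg _
    have hyy : 0 < y ⬝ᵥ y := by
      have h1 : 0 ≤ y ⬝ᵥ y := by
        simp only [dotProduct]
        exact Finset.sum_nonneg fun i _ => mul_self_nonneg _
      rcases h1.lt_or_eq with h | h
      · exact h
      · exact absurd (dotProduct_self_eq_zero.mp h.symm) hy0
    -- interval excitation gives `y ⬝ᵥ z ≥ Cc * (y ⬝ᵥ y)`
    have hyz : Cc * (y ⬝ᵥ y) ≤ y ⬝ᵥ z := by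
      have gcont : Continuous fun s => y ⬝ᵥ (((Ω s)ᵀ * Ω s) *ᵥ y) :=
        quad_cont _ hW y
      have gint : ∀ a b : ℝ,
          IntervalIntegrable (fun s => y ⬝ᵥ (((Ω s)ᵀ * Ω s) *ᵥ y)) volume a b :=
        fun a b => gcont.intervalIntegrable a b
      have gnonneg : ∀ s : ℝ, 0 ≤ y ⬝ᵥ (((Ω s)ᵀ * Ω s) *ᵥ y) := by
        intro s
        rw [← Matrix.mulVec_mulVec, Matrix.dotProduct_mulVec, Matrix.vecMul_transpose]
        simp only [dotProduct]
        exact Finset.sum_nonneg fun i _ => mul_self_nonneg _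
      have h2 : y ⬝ᵥ z = ∫ s in (0:ℝ)..t, y ⬝ᵥ (((Ω s)ᵀ * Ω s) *ᵥ y) := by
        rw [hzdef, hSdef]
        exact Smat_quad _ hW t y
      have e1 := intervalIntegral.integral_add_adjacent_intervals
        (gint 0 t₀) (gint t₀ t)
      have e2 := intervalIntegral.integral_add_adjacent_intervals
        (gint t₀ (t₀ + tc)) (gint (t₀ + tc) t)
      have i1 : 0 ≤ ∫ s in (0:ℝ)..t₀, y ⬝ᵥ (((Ω s)ᵀ * Ω s) *ᵥ y) :=
        intervalIntegral.integral_nonneg ht₀.le fun u _ => gnonneg u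
      have i3 : 0 ≤ ∫ s in (t₀ + tc)..t, y ⬝ᵥ (((Ω s)ᵀ * Ω s) *ᵥ y) :=
        intervalIntegral.integral_nonneg ht fun u _ => gnonneg u
      have imid : Cc * (y ⬝ᵥ y) ≤ ∫ s in t₀..(t₀ + tc), y ⬝ᵥ (((Ω s)ᵀ * Ω s) *ᵥ y) := by
        have h3 := quad_integral (fun s => (Ω s)ᵀ * Ω s) hW t₀ (t₀ + tc) y
        exact le_of_le_of_eq (hIE y) h3
      rw [h2, ← e1, ← e2]
      linarith
    have hyzpos : 0 < y ⬝ᵥ z := lt_of_lt_of_le (mul_pos hCc hyy) hyz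
    rw [hq]
    have hterm1 : 0 < f₀ * (α * (y ⬝ᵥ z)) := by positivity
    have hterm2 : 0 ≤ α * (α * (z ⬝ᵥ z)) := by positivity
    linarith
  have hPD : ((1 : Matrix (Fin p) (Fin p) ℝ) - f₀ • F t).PosDef :=
    Matrix.PosDef.of_dotProduct_mulVec_pos hMherm (fun x hx => hMpos x hx)
  exact ⟨hPD, hPD.det_pos⟩
end
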